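/- Let ψ be a random convex λ-smooth function on ℝ^d with E[ψ(x)] = f(x) and E[∇ψ(x)] = ∇f(x) for all x, where f has minimizer x* with ∇f(x*) = 0. Then E‖∇ψ(x) − ∇ψ(x*) − ∇f(x)‖² ≤ 2λ·(f(x) − f(x*)). -/

import Mathlib

open MeasureTheory Filter Topology
open scoped RealInnerProductSpace

section Aux

variable {F : Type*} [NormedAddCommGroup F] [InnerProductSpace ℝ F] [CompleteSpace F]


/-- derivative along a line -/
lemma hasDerivAt_line {ψ : F → ℝ} (hdiff : Differentiable ℝ ψ) (a v : F) (t : ℝ) :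
    HasDerivAt (fun s : ℝ => ψ (a + s • v)) ⟪gradient ψ (a + t • v), v⟫ t := by
  have h2 : HasDerivAt (fun s : ℝ => a + s • v) v t := by
    simpa using ((hasDerivAt_id t).smul_const v).const_add a
  have h1 : HasFDerivAt ψ ((InnerProductSpace.toDual ℝ F) (gradient ψ (a + t • v)))
      (a + t • v) := (hdiff (a + t • v)).hasGradientAt.hasFDerivAt
  have := h1.comp_hasDerivAt t h2
  simpa [Function.comp_def] using this

/-- gradient inequality for convex differentiable functions -/
lemma grad_ineq {ψ : F → ℝ} (hconv : ConvexOn ℝ Set.univ ψ) (hdiff : Differentiable ℝ ψ)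
    (a b : F) : ψ a + ⟪gradient ψ a, b - a⟫ ≤ ψ b := by
  rcases eq_or_ne a b with rfl | hab
  · simp
  · set v := b - a with hv
    have hq : ConvexOn ℝ Set.univ (fun t : ℝ => ψ (a + t • v)) := by
      have := hconv.comp_affineMap (AffineMap.lineMap a b : ℝ →ᵃ[ℝ] F)
      have he : (ψ ∘ ⇑(AffineMap.lineMap a b : ℝ →ᵃ[ℝ] F)) = fun t : ℝ => ψ (a + t • v) := by
        funext t
        simp [Function.comp, AffineMap.lineMap_apply_module', hv, add_comm]
      rw [he] at this
      simpa using this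
    have hder := hasDerivAt_line hdiff a v 0
    have := hq.le_slope_of_hasDerivAt (Set.mem_univ 0) (Set.mem_univ 1) one_pos (by simpa using hder)
    rw [slope_def_field] at this
    simp only [zero_smul, add_zero, one_smul] at this ⊢
    have : ⟪gradient ψ a, v⟫ ≤ ψ (a + v) - ψ a := by
      simpa [div_one] using this
    have hab' : a + v = b := by rw [hv]; abel
    rw [hab'] at this
    linarith

/-- co-coercivity -/
lemma cocoercive {ψ : F → ℝ} {lam : ℝ} (hconv : ConvexOn ℝ Set.univ ψ)
    (hdiff : Differentiable ℝ ψ)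
    (hsmooth : ∀ a b, ψ b ≤ ψ a + ⟪gradient ψ a, b - a⟫ + lam / 2 * ‖b - a‖ ^ 2)
    (a b : F) :
    ‖gradient ψ b - gradient ψ a‖ ^ 2 ≤ 2 * lam * (ψ b - ψ a - ⟪gradient ψ a, b - a⟫) := by
  rcases le_or_gt lam 0 with hlam | hlam
  · -- lam ≤ 0 : ψ is affine
    have key : ∀ p q : F, ψ q - ψ p - ⟪gradient ψ p, q - p⟫ = 0 := by
      intro p q
      have h1 := grad_ineq hconv hdiff p q
      have h2 := hsmooth p q
      have h3 : lam / 2 * ‖q - p‖ ^ 2 ≤ 0 := by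
        apply mul_nonpos_of_nonpos_of_nonneg (by linarith) (by positivity)
      linarith
    have hgr : gradient ψ b = gradient ψ a := by
      set e := gradient ψ a - gradient ψ b with he
      have h1 := key a (a + e)
      have h2 := key b (a + e)
      have h3 := key b a
      simp only [add_sub_cancel_left] at h1
      have hq1 : a + e - b = (a - b) + e := by abel
      rw [hq1, inner_add_right] at h2
      have hinner : ⟪gradient ψ a - gradient ψ b, e⟫ = 0 := by
        rw [inner_sub_left]; linarith
      have hsq : ‖e‖ ^ 2 = 0 := by
        rw [← real_inner_self_eq_norm_sq]
        simpa [he] using hinner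
      have hne : ‖e‖ = 0 := by nlinarith [norm_nonneg e]
      have he0 : gradient ψ a - gradient ψ b = 0 := by rw [← he]; exact norm_eq_zero.mp hne
      exact (sub_eq_zero.mp he0).symm
    rw [hgr, key a b]
    simp
  · -- lam > 0
    set u := gradient ψ b - gradient ψ a with hu
    set z := b - lam⁻¹ • u with hz
    have hc := grad_ineq hconv hdiff a z
    have hs := hsmooth b z
    have hzb : z - b = -(lam⁻¹ • u) := by rw [hz]; abel
    have hza : z - a = (b - a) - lam⁻¹ • u := by rw [hz]; abel
    have hnzb : ‖z - b‖ ^ 2 = lam⁻¹ ^ 2 * ‖u‖ ^ 2 := by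
      rw [hzb, norm_neg, norm_smul]
      simp [abs_of_nonneg (le_of_lt (inv_pos.mpr hlam)), mul_pow]
    have hib : ⟪gradient ψ b, z - b⟫ = -(lam⁻¹ * ⟪gradient ψ b, u⟫) := by
      rw [hzb, inner_neg_right, real_inner_smul_right]
    have hia : ⟪gradient ψ a, z - a⟫ = ⟪gradient ψ a, b - a⟫ - lam⁻¹ * ⟪gradient ψ a, u⟫ := by
      rw [hza, inner_sub_right, real_inner_smul_right]
    have huu : ⟪gradient ψ b, u⟫ - ⟪gradient ψ a, u⟫ = ‖u‖ ^ 2 := by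
      rw [← inner_sub_left, ← hu, real_inner_self_eq_norm_sq]
    rw [hia] at hc
    rw [hib, hnzb] at hs
    have hl : (0:ℝ) < lam⁻¹ := inv_pos.mpr hlam
    have hll : lam * lam⁻¹ = 1 := mul_inv_cancel₀ (ne_of_gt hlam)
    have hne : lam ≠ 0 := ne_of_gt hlam
    have e1 : lam / 2 * (lam⁻¹ ^ 2 * ‖u‖ ^ 2) = lam⁻¹ * ‖u‖ ^ 2 / 2 := by
      field_simp
    have hXY := hc.trans hs
    rw [e1] at hXY
    have huu2 : lam⁻¹ * ⟪gradient ψ b, u⟫ - lam⁻¹ * ⟪gradient ψ a, u⟫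
        = lam⁻¹ * ‖u‖ ^ 2 := by rw [← mul_sub, huu]
    have hchain : lam⁻¹ * ‖u‖ ^ 2 / 2 ≤ ψ b - ψ a - ⟪gradient ψ a, b - a⟫ := by
      linarith
    have hfin := mul_le_mul_of_nonneg_left hchain hlam.le
    have e2 : lam * (lam⁻¹ * ‖u‖ ^ 2 / 2) = ‖u‖ ^ 2 / 2 := by field_simp
    rw [e2] at hfin
    linarith

lemma psi_diff_integrable {Ω : Type*} [MeasurableSpace Ω] (μ : Measure Ω)
    [IsProbabilityMeasure μ] (ψ : Ω → F → ℝ) (lam : ℝ)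
    (hconv : ∀ ω, ConvexOn ℝ Set.univ (ψ ω))
    (hdiff : ∀ ω, Differentiable ℝ (ψ ω))
    (hsmooth : ∀ ω a b, ψ ω b ≤ ψ ω a + ⟪gradient (ψ ω) a, b - a⟫ + lam / 2 * ‖b - a‖ ^ 2)
    (hgradint : ∀ z, Integrable (fun ω => gradient (ψ ω) z) μ)
    (a b : F) : Integrable (fun ω => ψ ω b - ψ ω a) μ := by
  set v := b - a with hv
  set D : Ω → ℝ → ℝ := fun ω t => ⟪gradient (ψ ω) (a + t • v), v⟫ with hD
  set S : ℕ → Ω → ℝ := fun n ω => ∑ i ∈ Finset.range n, D ω ((i : ℝ) / n) / n with hS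
  have hSmeas : ∀ n, AEStronglyMeasurable (S n) μ := by
    intro n
    apply Finset.aestronglyMeasurable_fun_sum
    intro i _
    have h1 : AEStronglyMeasurable (fun ω => D ω ((i : ℝ) / n)) μ :=
      (hgradint _).aestronglyMeasurable.inner aestronglyMeasurable_const
    simp only [div_eq_mul_inv]
    exact h1.mul aestronglyMeasurable_const
  have hmono : ∀ ω, Monotone (D ω) := by
    intro ω s t hst
    rcases eq_or_lt_of_le hst with rfl | hlt
    · exact le_refl _
    · set p := a + s • v
      set q := a + t • v
      have hqp : q - p = (t - s) • v := by
        simp only [p, q]; module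
      have h1 := grad_ineq (hconv ω) (hdiff ω) p q
      have h2 := grad_ineq (hconv ω) (hdiff ω) q p
      have hpq : p - q = -((t - s) • v) := by rw [← hqp]; abel
      rw [hqp, real_inner_smul_right] at h1
      rw [hpq, inner_neg_right, real_inner_smul_right] at h2
      have hts : 0 < t - s := by linarith
      simp only [hD]
      nlinarith [h1, h2]
  have htend : ∀ ω, Tendsto (fun n => S n ω) atTop (𝓝 (ψ ω b - ψ ω a)) := by
    intro ω
    set φ : ℝ → ℝ := fun t => ψ ω (a + t • v) with hφ
    have hφ0 : φ 0 = ψ ω a := by simp [hφ]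
    have hφ1 : φ 1 = ψ ω b := by simp [hφ, hv]
    have hφcont : Continuous φ := (hdiff ω).continuous.comp (by continuity)
    have hkey : ∀ n : ℕ, 0 < n →
        S n ω ≤ ψ ω b - ψ ω a ∧ ψ ω b - ψ ω a ≤ S n ω + (D ω 1 - D ω 0) / n := by
      intro n hn
      have hnR : (0:ℝ) < n := by exact_mod_cast hn
      have hnne : (n:ℝ) ≠ 0 := ne_of_gt hnR
      set Φ : ℕ → ℝ := fun i => φ ((i : ℝ) / n) with hΦ
      set G : ℕ → ℝ := fun i => D ω ((i : ℝ) / n) / n with hG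
      have step : ∀ i : ℕ, G i ≤ Φ (i + 1) - Φ i ∧ Φ (i + 1) - Φ i ≤ G (i + 1) := by
        intro i
        have hlt : (i : ℝ) / n < ((i : ℝ) + 1) / n := by
          apply div_lt_div_of_pos_right (by linarith) hnR
        obtain ⟨ξ, hξ, hder⟩ := exists_hasDerivAt_eq_slope φ (fun t => D ω t) hlt
          hφcont.continuousOn (fun t _ => hasDerivAt_line (hdiff ω) a v t)
        have hden : ((i : ℝ) + 1) / n - (i : ℝ) / n = 1 / n := by field_simp; ring
        rw [hden, div_div_eq_mul_div, div_one] at hder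
        have hstepeq : Φ (i + 1) - Φ i = D ω ξ / n := by
          rw [eq_div_iff hnne]
          have hcast : ((i + 1 : ℕ) : ℝ) = (i : ℝ) + 1 := by push_cast; ring
          simp only [hΦ, hcast]
          linarith [hder]
        have hcast : ((i + 1 : ℕ) : ℝ) = (i : ℝ) + 1 := by push_cast; ring
        constructor
        · rw [hstepeq]
          show D ω ((i : ℝ) / n) / n ≤ D ω ξ / n
          gcongr
          exact hmono ω hξ.1.le
        · rw [hstepeq]
          show D ω ξ / n ≤ D ω (((i + 1 : ℕ) : ℝ) / n) / n
          rw [hcast]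
          gcongr
          exact hmono ω hξ.2.le
      have hsumΦ : ∑ i ∈ Finset.range n, (Φ (i + 1) - Φ i) = Φ n - Φ 0 :=
        Finset.sum_range_sub Φ n
      have hsumG : ∑ i ∈ Finset.range n, (G (i + 1) - G i) = G n - G 0 :=
        Finset.sum_range_sub G n
      have hΦn : Φ n = ψ ω b := by
        simp only [hΦ, div_self hnne, hφ1]
      have hΦ0 : Φ 0 = ψ ω a := by simp [hΦ, hφ0]
      have hSeq : S n ω = ∑ i ∈ Finset.range n, G i := rfl
      have hlow : S n ω ≤ Φ n - Φ 0 := by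
        rw [hSeq, ← hsumΦ]
        exact Finset.sum_le_sum fun i _ => (step i).1
      have hup : Φ n - Φ 0 ≤ S n ω + (G n - G 0) := by
        rw [← hsumΦ, ← hsumG, hSeq, ← Finset.sum_add_distrib]
        refine Finset.sum_le_sum fun i _ => ?_
        have := (step i).2
        linarith
      have hGn : G n - G 0 = (D ω 1 - D ω 0) / n := by
        simp only [hG, div_self hnne, Nat.cast_zero, zero_div, sub_div]
      rw [hΦn, hΦ0] at hlow hup
      rw [hGn] at hup
      exact ⟨hlow, hup⟩
    refine tendsto_of_tendsto_of_tendsto_of_le_of_le'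
      (g := fun n : ℕ => (ψ ω b - ψ ω a) - (D ω 1 - D ω 0) / n)
      (h := fun _ : ℕ => ψ ω b - ψ ω a) ?_ tendsto_const_nhds ?_ ?_
    · simpa using tendsto_const_nhds.sub
        (tendsto_const_div_atTop_nhds_zero_nat (D ω 1 - D ω 0))
    · filter_upwards [eventually_gt_atTop 0] with n hn
      linarith [(hkey n hn).2]
    · filter_upwards [eventually_gt_atTop 0] with n hn
      exact (hkey n hn).1
  have hmeas : AEStronglyMeasurable (fun ω => ψ ω b - ψ ω a) μ :=
    aestronglyMeasurable_of_tendsto_ae atTop hSmeas (ae_of_all _ htend)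
  refine Integrable.mono' (g := fun ω => |⟪gradient (ψ ω) a, v⟫| + |lam| / 2 * ‖v‖ ^ 2)
    (((hgradint a).inner_const v).abs.add (integrable_const _)) hmeas (ae_of_all _ ?_)
  intro ω
  have h1 := grad_ineq (hconv ω) (hdiff ω) a b
  have h2 := hsmooth ω a b
  rw [← hv] at h1 h2
  rw [Real.norm_eq_abs, abs_le]
  constructor
  · nlinarith [neg_abs_le (⟪gradient (ψ ω) a, v⟫ : ℝ), abs_nonneg lam, norm_nonneg v,
      sq_nonneg ‖v‖]
  · nlinarith [le_abs_self (⟪gradient (ψ ω) a, v⟫ : ℝ), le_abs_self lam, sq_nonneg ‖v‖]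

end Aux

/-- For a random convex λ-smooth `ψ` with `E[ψ] = f`, `E[∇ψ] = ∇f`, and
minimizer `x*` of `f` with `∇f(x*) = 0`:
`E‖∇ψ(x) − ∇ψ(x*) − ∇f(x)‖² ≤ 2λ(f(x) − f(x*))`. -/
theorem stmt9 {d : ℕ} {Ω : Type*} [MeasurableSpace Ω]
    (μ : Measure Ω) [IsProbabilityMeasure μ]
    (ψ : Ω → EuclideanSpace ℝ (Fin d) → ℝ) (f : EuclideanSpace ℝ (Fin d) → ℝ) (lam : ℝ)
    (hconv : ∀ ω, ConvexOn ℝ Set.univ (ψ ω))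
    (hdiff : ∀ ω, Differentiable ℝ (ψ ω))
    (hsmooth : ∀ ω a b, ψ ω b ≤ ψ ω a + ⟪gradient (ψ ω) a, b - a⟫ + lam / 2 * ‖b - a‖ ^ 2)
    (hf : ∀ z, f z = ∫ ω, ψ ω z ∂μ)
    (hgradint : ∀ z, Integrable (fun ω => gradient (ψ ω) z) μ)
    (hgrad : ∀ z, gradient f z = ∫ ω, gradient (ψ ω) z ∂μ)
    (xs x : EuclideanSpace ℝ (Fin d))
    (hgrad0 : gradient f xs = 0) (hmin : ∀ z, f xs ≤ f z)
    (hint : Integrable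
      (fun ω => ‖gradient (ψ ω) x - gradient (ψ ω) xs - gradient f x‖ ^ 2) μ) :
    ∫ ω, ‖gradient (ψ ω) x - gradient (ψ ω) xs - gradient f x‖ ^ 2 ∂μ
      ≤ 2 * lam * (f x - f xs) := by
  set δ : EuclideanSpace ℝ (Fin d) := x - xs with hδ
  set c : EuclideanSpace ℝ (Fin d) := gradient f x with hc
  set u : Ω → EuclideanSpace ℝ (Fin d) := fun ω => gradient (ψ ω) x - gradient (ψ ω) xs with hu
  have hu_int : Integrable u μ := (hgradint x).sub (hgradint xs)
  have hu_eq : ∫ ω, u ω ∂μ = c := by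
    rw [hu]
    rw [integral_sub (hgradint x) (hgradint xs), ← hgrad x, ← hgrad xs, hgrad0, sub_zero]
  -- pointwise cocoercivity
  have hcoco : ∀ ω, ‖u ω‖ ^ 2 ≤
      2 * lam * (ψ ω x - ψ ω xs - ⟪gradient (ψ ω) xs, δ⟫) := fun ω =>
    cocoercive (hconv ω) (hdiff ω) (hsmooth ω) xs x
  have hcoco' : ∀ ω, ‖u ω‖ ^ 2 ≤
      2 * lam * (ψ ω xs - ψ ω x - ⟪gradient (ψ ω) x, -δ⟫) := by
    intro ω
    have h := cocoercive (hconv ω) (hdiff ω) (hsmooth ω) x xs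
    have hnorm : ‖gradient (ψ ω) xs - gradient (ψ ω) x‖ = ‖u ω‖ := by
      rw [hu, norm_sub_rev]
    rw [hnorm] at h
    have : xs - x = -δ := by rw [hδ]; abel
    rw [this] at h
    exact h
  -- integrability of ‖u‖²
  have husq_int : Integrable (fun ω => ‖u ω‖ ^ 2) μ := by
    have heq : (fun ω => ‖u ω‖ ^ 2)
        = fun ω => ‖u ω - c‖ ^ 2 + (2 * ⟪u ω - c, c⟫ + ‖c‖ ^ 2) := by
      funext ω
      have := norm_add_sq_real (u ω - c) c
      simp only [sub_add_cancel] at this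
      linarith
    rw [heq]
    exact hint.add ((((hu_int.sub (integrable_const c)).inner_const c).const_mul 2).add
      (integrable_const _))
  -- the integral identity : ∫‖u-c‖² = ∫‖u‖² - ‖c‖²
  have hiden : ∫ ω, ‖u ω - c‖ ^ 2 ∂μ = (∫ ω, ‖u ω‖ ^ 2 ∂μ) - ‖c‖ ^ 2 := by
    have heq : (fun ω => ‖u ω - c‖ ^ 2)
        = fun ω => ‖u ω‖ ^ 2 - (2 * ⟪c, u ω⟫ - ‖c‖ ^ 2) := by
      funext ω
      have := norm_sub_sq_real (u ω) c
      rw [real_inner_comm] at this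
      linarith
    have hA : Integrable (fun ω => 2 * ⟪c, u ω⟫ - ‖c‖ ^ 2) μ :=
      ((Integrable.const_inner c hu_int).const_mul 2).sub (integrable_const _)
    rw [heq, integral_sub husq_int hA]
    have hB : ∫ ω, (2 * ⟪c, u ω⟫ - ‖c‖ ^ 2) ∂μ = ‖c‖ ^ 2 := by
      rw [integral_sub ((Integrable.const_inner c hu_int).const_mul 2) (integrable_const _),
        integral_const_mul, integral_inner hu_int, hu_eq, real_inner_self_eq_norm_sq,
        integral_const]
      simp [measure_univ]
      ring
    rw [hB]
  have hgoal_eq : (fun ω => ‖gradient (ψ ω) x - gradient (ψ ω) xs - gradient f x‖ ^ 2)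
      = fun ω => ‖u ω - c‖ ^ 2 := rfl
  rw [hgoal_eq, hiden]
  by_cases hψx : Integrable (fun ω => ψ ω x) μ
  · -- main case
    have hd := psi_diff_integrable μ ψ lam hconv hdiff hsmooth hgradint xs x
    -- integrable (ψ·x - ψ·xs)
    have hψxs : Integrable (fun ω => ψ ω xs) μ := by
      have : (fun ω => ψ ω xs) = fun ω => ψ ω x - (ψ ω x - ψ ω xs) := by
        funext ω; ring
      rw [this]
      exact hψx.sub hd
    have hg_int : Integrable (fun ω => ψ ω x - ψ ω xs - ⟪gradient (ψ ω) xs, δ⟫) μ :=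
      (hψx.sub hψxs).sub ((hgradint xs).inner_const δ)
    have h1 : ∫ ω, ‖u ω‖ ^ 2 ∂μ
        ≤ ∫ ω, 2 * lam * (ψ ω x - ψ ω xs - ⟪gradient (ψ ω) xs, δ⟫) ∂μ :=
      integral_mono husq_int (hg_int.const_mul _) hcoco
    have h2 : ∫ ω, 2 * lam * (ψ ω x - ψ ω xs - ⟪gradient (ψ ω) xs, δ⟫) ∂μ
        = 2 * lam * (f x - f xs) := by
      rw [integral_const_mul]
      congr 1
      rw [integral_sub hd ((hgradint xs).inner_const δ), integral_sub hψx hψxs]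
      have hiv : ∫ ω, ⟪gradient (ψ ω) xs, δ⟫ ∂μ = 0 := by
        have hcomm : ∀ ω, (⟪gradient (ψ ω) xs, δ⟫:ℝ) = ⟪δ, gradient (ψ ω) xs⟫ :=
          fun ω => real_inner_comm _ _
        simp_rw [hcomm]
        rw [integral_inner (hgradint xs), ← hgrad xs, hgrad0, inner_zero_right]
      rw [hiv, ← hf x, ← hf xs, sub_zero]
    linarith [h1, h2, sq_nonneg ‖c‖]
  · -- degenerate case : ψ never integrable, f ≡ 0
    have hno : ∀ z, ¬ Integrable (fun ω => ψ ω z) μ := by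
      intro z hz
      apply hψx
      have hd := psi_diff_integrable μ ψ lam hconv hdiff hsmooth hgradint z x
      have : (fun ω => ψ ω x) = fun ω => ψ ω z + (ψ ω x - ψ ω z) := by
        funext ω; ring
      rw [this]
      exact hz.add hd
    have hf0 : ∀ z, f z = 0 := fun z => (hf z).trans (integral_undef (hno z))
    have hfc : f = fun _ => (0:ℝ) := funext hf0
    have hc0 : c = 0 := by rw [hc, hfc]; exact gradient_const x (0:ℝ)
    have hpt : ∀ ω, ‖u ω‖ ^ 2 ≤ lam * ⟪u ω, δ⟫ := by
      intro ω
      have h1 := hcoco ω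
      have h2 := hcoco' ω
      have hsum : ⟪u ω, δ⟫ = ⟪gradient (ψ ω) x, δ⟫ - ⟪gradient (ψ ω) xs, δ⟫ := by
        rw [hu, inner_sub_left]
      rw [inner_neg_right] at h2
      have hsum2 : lam * ⟪u ω, δ⟫
          = lam * ⟪gradient (ψ ω) x, δ⟫ - lam * ⟪gradient (ψ ω) xs, δ⟫ := by
        rw [hsum]; ring
      linarith [h1, h2, hsum2]
    have h3 : ∫ ω, ‖u ω‖ ^ 2 ∂μ ≤ ∫ ω, lam * ⟪u ω, δ⟫ ∂μ :=
      integral_mono husq_int ((hu_int.inner_const δ).const_mul lam) hpt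
    have h4 : ∫ ω, lam * ⟪u ω, δ⟫ ∂μ = 0 := by
      have : ∀ ω, lam * ⟪u ω, δ⟫ = lam * ⟪δ, u ω⟫ := by
        intro ω; rw [real_inner_comm]
      simp_rw [this]
      rw [integral_const_mul, integral_inner hu_int, hu_eq, hc0, inner_zero_right, mul_zero]
    rw [hf0 x, hf0 xs, hc0]
    simp only [norm_zero]
    have : (0:ℝ) ^ 2 = 0 := by norm_num
    rw [this, sub_zero, sub_zero, mul_zero]
    linarith [h3, h4]
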